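/- Let X be a countable set, F = (F_x)_{x∈X} a family of finite-dimensional complex normed vector spaces, and A : Γ(X;F) → Γ(X;F) a continuous linear operator on Γ(X;F) = ∏_x F_x (product topology). For finite K ⊆ X set U_K = {f ∈ Γ(X;F) : ∑_{x∈K} ‖f(x)‖_x ≤ 1}. Assume the dual operator A' : Γ_c(X;F') → Γ_c(X;F') is injective. Then for every nonempty finite K ⊆ X there exist ε > 0 and a nonempty finite K' ⊆ X such that A(U_K) ⊇ ε·U_{K'} (no closure needed). -/

import Mathlib

open Function
open scoped Classical

set_option linter.unusedSectionVars false
set_option maxHeartbeats 1000000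

section Aux
variable {X : Type*}
variable {F : X → Type*} [∀ x, NormedAddCommGroup (F x)] [∀ x, NormedSpace ℂ (F x)]

/-- Restriction to a finite set of coordinates, as a linear map. -/
def rmapAux (F : X → Type*) [∀ x, NormedAddCommGroup (F x)] [∀ x, NormedSpace ℂ (F x)]
    (P : Finset X) : (∀ x, F x) →ₗ[ℂ] (∀ x : P, F x) :=
  LinearMap.pi fun x => LinearMap.proj (x : X)

@[simp] lemma rmapAux_apply (P : Finset X) (f : ∀ x, F x) (x : P) :
    rmapAux F P f x = f x := rfl

/-- Extension by zero from a finite set of coordinates, as a linear map. -/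
noncomputable def emapAux (F : X → Type*) [∀ x, NormedAddCommGroup (F x)]
    [∀ x, NormedSpace ℂ (F x)] (S : Finset X) : (∀ x : S, F x) →ₗ[ℂ] (∀ x, F x) where
  toFun p x := if h : x ∈ S then p ⟨x, h⟩ else 0
  map_add' p q := by funext x; by_cases h : x ∈ S <;> simp [h]
  map_smul' c p := by funext x; by_cases h : x ∈ S <;> simp [h]

lemma emapAux_apply_mem (S : Finset X) (p : ∀ x : S, F x) {x : X} (h : x ∈ S) :
    emapAux F S p x = p ⟨x, h⟩ := dif_pos h

/-- Each coordinate of the output of a continuous linear operator on the product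
depends on only finitely many input coordinates. -/
lemma rowFinite (A : (∀ x, F x) →L[ℂ] (∀ x, F x)) (x : X) :
    ∃ S : Finset X, ∀ f : ∀ y, F y, (∀ y ∈ S, f y = 0) → A f x = 0 := by
  let L : (∀ y, F y) →L[ℂ] F x := (ContinuousLinearMap.proj x).comp A
  have hc : Continuous L := L.continuous
  have h1 : L ⁻¹' Metric.ball (0 : F x) 1 ∈ nhds (0 : ∀ y, F y) := by
    apply hc.continuousAt.preimage_mem_nhds
    simp [Metric.ball_mem_nhds]
  rw [nhds_pi, Filter.mem_pi] at h1
  obtain ⟨I, hI, t, ht, hsub⟩ := h1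
  refine ⟨hI.toFinset, fun f hf => ?_⟩
  have key : ∀ c : ℂ, c • f ∈ Set.pi I t := by
    intro c y hy
    have : f y = 0 := hf y (hI.mem_toFinset.mpr hy)
    simp only [Pi.smul_apply, this, smul_zero]
    exact mem_of_mem_nhds (ht y)
  have hb : ∀ c : ℂ, ‖c‖ * ‖L f‖ < 1 := by
    intro c
    have := hsub (key c)
    simp only [Set.mem_preimage, Metric.mem_ball, dist_zero_right] at this
    calc ‖c‖ * ‖L f‖ = ‖L (c • f)‖ := by rw [map_smul, norm_smul]
    _ < 1 := this
  by_contra hne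
  have hLf : L f = A f x := rfl
  have hpos : 0 < ‖L f‖ := by
    rw [hLf]; exact norm_pos_iff.mpr hne
  have := hb ((2 / ‖L f‖ : ℝ) : ℂ)
  rw [Complex.norm_real] at this
  have h2 : |2 / ‖L f‖| = 2 / ‖L f‖ := abs_of_pos (by positivity)
  rw [Real.norm_eq_abs, h2, div_mul_cancel₀ _ (ne_of_gt hpos)] at this
  linarith

/-- Agreement on the row set implies agreement of the outputs at that coordinate. -/
lemma rowAgree (A : (∀ x, F x) →L[ℂ] (∀ x, F x)) {x : X} {S : Finset X}
    (hS : ∀ f : ∀ y, F y, (∀ y ∈ S, f y = 0) → A f x = 0)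
    {f g : ∀ y, F y} (hfg : ∀ y ∈ S, f y = g y) : A f x = A g x := by
  have h0 : A (f - g) x = 0 := hS (f - g) (fun y hy => by
    rw [Pi.sub_apply, hfg y hy, sub_self])
  have h1 : A (f - g) = A f - A g := map_sub A f g
  rw [h1, Pi.sub_apply] at h0
  exact sub_eq_zero.mp h0

variable [∀ x, FiniteDimensional ℂ (F x)]

/-- Injectivity of the dual operator implies that all finite truncations of `A`
are surjective. -/
lemma truncSurj (A : (∀ x, F x) →L[ℂ] (∀ x, F x))
    (hinj : ∀ φ : ∀ x, F x →L[ℂ] ℂ, {x | φ x ≠ 0}.Finite →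
      (∀ f : ∀ x, F x, ∑ᶠ x, φ x (A f x) = 0) → ∀ x, φ x = 0)
    (T : Finset X) :
    Function.Surjective ((rmapAux F T).comp (A : (∀ x, F x) →ₗ[ℂ] (∀ x, F x))) := by
  rw [← LinearMap.range_eq_top]
  by_contra hne
  have hlt : LinearMap.range ((rmapAux F T).comp (A : (∀ x, F x) →ₗ[ℂ] (∀ x, F x))) < ⊤ :=
    lt_top_iff_ne_top.mpr hne
  obtain ⟨φ, hφ0, hφmap⟩ := Submodule.exists_dual_map_eq_bot_of_lt_top hlt inferInstance
  rw [← LinearMap.le_ker_iff_map] at hφmap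
  have hker : ∀ f : ∀ x, F x, φ (rmapAux F T (A f)) = 0 := by
    intro f
    exact hφmap ⟨f, rfl⟩
  set ψ : ∀ x, F x →L[ℂ] ℂ := fun x =>
    if h : x ∈ T then
      LinearMap.toContinuousLinearMap (φ.comp (LinearMap.single ℂ (fun y : T => F y) ⟨x, h⟩))
    else 0 with hψ
  have hψ_mem : ∀ (x : X) (h : x ∈ T) (w : F x),
      ψ x w = φ (Pi.single (⟨x, h⟩ : T) w) := by
    intro x h w
    simp only [hψ, dif_pos h, LinearMap.coe_toContinuousLinearMap', LinearMap.comp_apply,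
      LinearMap.single_apply]
  have hψ_zero : ∀ x, x ∉ T → ψ x = 0 := by
    intro x hxT; simp [hψ, dif_neg hxT]
  have hψ_supp : {x | ψ x ≠ 0}.Finite := by
    apply Set.Finite.subset T.finite_toSet
    intro x hx
    simp only [Set.mem_setOf_eq] at hx
    by_contra hxT
    exact hx (hψ_zero x (by simpa using hxT))
  have hφ_decomp : ∀ v : ∀ x : T, F x, φ v = ∑ i ∈ T.attach, φ (Pi.single i (v i)) := by
    intro v
    conv_lhs => rw [← Finset.univ_sum_single v]
    rw [map_sum, Finset.univ_eq_attach]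
  have hsum : ∀ f : ∀ x, F x, ∑ᶠ x, ψ x (A f x) = 0 := by
    intro f
    have hss : (support fun x => ψ x (A f x)) ⊆ ↑T := by
      intro x hx
      by_contra hxT
      apply hx
      simp only [hψ_zero x (by simpa using hxT), ContinuousLinearMap.zero_apply]
    rw [finsum_eq_finset_sum_of_support_subset _ hss]
    rw [← Finset.sum_attach T (fun x => ψ x (A f x))]
    have : ∑ i ∈ T.attach, ψ (i : X) (A f i) = φ (rmapAux F T (A f)) := by
      rw [hφ_decomp (rmapAux F T (A f))]
      apply Finset.sum_congr rfl
      intro i _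
      rw [hψ_mem i i.2]
      congr 1
    rw [this, hker]
  have hψ0 := hinj ψ hψ_supp hsum
  apply hφ0
  apply LinearMap.ext
  intro v
  rw [hφ_decomp v]
  simp only [LinearMap.zero_apply]
  apply Finset.sum_eq_zero
  intro i _
  have := hψ0 i
  have h2 : ψ (i : X) (v i) = 0 := by rw [this]; rfl
  rw [hψ_mem i i.2] at h2
  convert h2 using 3

/-- The projection to coordinates in `P` of the solution space of the homogeneous system
restricted to `T`. -/
noncomputable def DPAux (A : (∀ x, F x) →L[ℂ] (∀ x, F x)) (P T : Finset X) :
    Submodule ℂ (∀ x : P, F x) :=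
  (LinearMap.ker ((rmapAux F T).comp (A : (∀ x, F x) →ₗ[ℂ] (∀ x, F x)))).map (rmapAux F P)

lemma mem_kerAT {A : (∀ x, F x) →L[ℂ] (∀ x, F x)} {T : Finset X} {f : ∀ x, F x} :
    f ∈ LinearMap.ker ((rmapAux F T).comp (A : (∀ x, F x) →ₗ[ℂ] (∀ x, F x))) ↔
      ∀ x ∈ T, A f x = 0 := by
  constructor
  · intro h x hx
    have := congrFun (LinearMap.mem_ker.mp h) ⟨x, hx⟩
    simpa using this
  · intro h
    apply LinearMap.mem_ker.mpr
    funext x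
    simpa using h x x.2

lemma DPAux_antitone (A : (∀ x, F x) →L[ℂ] (∀ x, F x)) (P : Finset X) {T T' : Finset X}
    (hTT' : T ⊆ T') : DPAux A P T' ≤ DPAux A P T := by
  apply Submodule.map_mono
  intro f hf
  rw [mem_kerAT] at hf ⊢
  exact fun x hx => hf x (hTT' hx)

/-- The projected solution spaces stabilize: there is a finite set `T₀ ⊇ P` such that
enlarging `T₀` does not shrink `DPAux A P ·` any further. -/
lemma exists_stab (A : (∀ x, F x) →L[ℂ] (∀ x, F x)) (P : Finset X) :
    ∃ T₀ : Finset X, P ⊆ T₀ ∧ ∀ T : Finset X, DPAux A P (T₀ ∪ T) = DPAux A P T₀ := by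
  set s : Set ℕ := {n | ∃ T : Finset X, P ⊆ T ∧ Module.finrank ℂ (DPAux A P T) = n} with hs_def
  have hs : s.Nonempty := ⟨_, P, Finset.Subset.refl P, rfl⟩
  obtain ⟨T₀, hPT₀, hrank⟩ := Nat.sInf_mem hs
  refine ⟨T₀, hPT₀, fun T => ?_⟩
  have hle : DPAux A P (T₀ ∪ T) ≤ DPAux A P T₀ := DPAux_antitone A P Finset.subset_union_left
  have h1 : Module.finrank ℂ (DPAux A P (T₀ ∪ T)) ∈ s :=
    ⟨T₀ ∪ T, subset_trans hPT₀ Finset.subset_union_left, rfl⟩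
  have h2 := Nat.sInf_le h1
  exact Submodule.eq_of_le_of_finrank_eq hle
    (le_antisymm (Submodule.finrank_mono hle) (hrank ▸ h2))

lemma sol_nonempty (A : (∀ x, F x) →L[ℂ] (∀ x, F x))
    (hinj : ∀ φ : ∀ x, F x →L[ℂ] ℂ, {x | φ x ≠ 0}.Finite →
      (∀ f : ∀ x, F x, ∑ᶠ x, φ x (A f x) = 0) → ∀ x, φ x = 0)
    (T : Finset X) (g : ∀ x, F x) : ∃ f, ∀ x ∈ T, A f x = g x := by
  obtain ⟨f, hf⟩ := truncSurj A hinj T (rmapAux F T g)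
  refine ⟨f, fun x hx => ?_⟩
  have := congrFun hf ⟨x, hx⟩
  simpa using this

/-- Once the projected solution spaces have stabilized, the projections of the affine
solution sets also stabilize. -/
lemma stab_images (A : (∀ x, F x) →L[ℂ] (∀ x, F x))
    (hinj : ∀ φ : ∀ x, F x →L[ℂ] ℂ, {x | φ x ≠ 0}.Finite →
      (∀ f : ∀ x, F x, ∑ᶠ x, φ x (A f x) = 0) → ∀ x, φ x = 0)
    {P T₀ : Finset X}
    (hstab : ∀ T : Finset X, DPAux A P (T₀ ∪ T) = DPAux A P T₀)
    {T : Finset X} (hT : T₀ ⊆ T) (g : ∀ x, F x) (f₀ : ∀ x, F x)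
    (hf₀ : ∀ x ∈ T₀, A f₀ x = g x) :
    ∃ f, (∀ x ∈ T, A f x = g x) ∧ ∀ x ∈ P, f x = f₀ x := by
  obtain ⟨f₁, hf₁⟩ := sol_nonempty A hinj T g
  have hker : f₁ - f₀ ∈ LinearMap.ker ((rmapAux F T₀).comp (A : (∀ x, F x) →ₗ[ℂ] (∀ x, F x))) := by
    rw [mem_kerAT]
    intro x hx
    have h1 : A (f₁ - f₀) = A f₁ - A f₀ := map_sub A f₁ f₀
    rw [h1, Pi.sub_apply, hf₁ x (hT hx), hf₀ x hx, sub_self]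
  have hmem : rmapAux F P (f₁ - f₀) ∈ DPAux A P T := by
    have h1 : DPAux A P T = DPAux A P T₀ := by
      have := hstab T
      rwa [Finset.union_eq_right.mpr hT] at this
    rw [h1]
    exact ⟨f₁ - f₀, hker, rfl⟩
  obtain ⟨h, hh, hhp⟩ := hmem
  rw [SetLike.mem_coe, mem_kerAT] at hh
  refine ⟨f₁ - h, ?_, ?_⟩
  · intro x hx
    have h1 : A (f₁ - h) = A f₁ - A h := map_sub A f₁ h
    rw [h1, Pi.sub_apply, hf₁ x hx, hh x hx, sub_zero]
  · intro x hx
    have := congrFun hhp ⟨x, hx⟩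
    simp only [rmapAux_apply, Pi.sub_apply] at this
    rw [Pi.sub_apply, this]
    abel

/-- `f` is a "good partial solution on `P`": for every finite `T` there is an exact
solution on `T` agreeing with `f` on `P`. -/
def GoodAux (A : (∀ x, F x) →L[ℂ] (∀ x, F x)) (g : ∀ x, F x) (P : Finset X)
    (f : ∀ x, F x) : Prop :=
  ∀ T : Finset X, ∃ h, (∀ x ∈ T, A h x = g x) ∧ ∀ x ∈ P, h x = f x

lemma good_extend (A : (∀ x, F x) →L[ℂ] (∀ x, F x))
    (hinj : ∀ φ : ∀ x, F x →L[ℂ] ℂ, {x | φ x ≠ 0}.Finite →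
      (∀ f : ∀ x, F x, ∑ᶠ x, φ x (A f x) = 0) → ∀ x, φ x = 0)
    (g : ∀ x, F x) {P Q : Finset X} (_hPQ : P ⊆ Q) {f : ∀ x, F x}
    (hf : GoodAux A g P f) :
    ∃ f', GoodAux A g Q f' ∧ ∀ x ∈ P, f' x = f x := by
  obtain ⟨T₀, hQT₀, hstab⟩ := exists_stab A Q
  obtain ⟨h, hsol, hagree⟩ := hf T₀
  refine ⟨h, fun T => ?_, hagree⟩
  obtain ⟨h', hsol', hag'⟩ := stab_images A hinj hstab
    (Finset.subset_union_left : T₀ ⊆ T₀ ∪ T) g h hsol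
  exact ⟨h', fun x hx => hsol' x (Finset.mem_union_right _ hx), hag'⟩

lemma good_start (A : (∀ x, F x) →L[ℂ] (∀ x, F x))
    (hinj : ∀ φ : ∀ x, F x →L[ℂ] ℂ, {x | φ x ≠ 0}.Finite →
      (∀ f : ∀ x, F x, ∑ᶠ x, φ x (A f x) = 0) → ∀ x, φ x = 0)
    (K : Finset X) (hK : K.Nonempty) :
    ∃ ε : ℝ, 0 < ε ∧ ∃ K' : Finset X, K'.Nonempty ∧ ∀ g : ∀ x, F x,
      (∑ x ∈ K', ‖g x‖) ≤ ε → ∃ f, GoodAux A g K f ∧ ∑ x ∈ K, ‖f x‖ ≤ 1 := by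
  obtain ⟨T₀, hKT₀, hstab⟩ := exists_stab A K
  choose Srow hSrow using rowFinite A
  set S : Finset X := (K ∪ T₀) ∪ T₀.biUnion Srow with hSdef
  have hKS : K ⊆ S :=
    subset_trans Finset.subset_union_left Finset.subset_union_left
  have hrowS : ∀ x ∈ T₀, Srow x ⊆ S := fun x hx =>
    subset_trans (Finset.subset_biUnion_of_mem Srow hx) Finset.subset_union_right
  set B : (∀ x : S, F x) →ₗ[ℂ] (∀ x : T₀, F x) :=
    ((rmapAux F T₀).comp (A : (∀ x, F x) →ₗ[ℂ] (∀ x, F x))).comp (emapAux F S) with hBdef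
  have hagreeS : ∀ (f₁ f₂ : ∀ y, F y), (∀ y ∈ S, f₁ y = f₂ y) → ∀ x ∈ T₀, A f₁ x = A f₂ x := by
    intro f₁ f₂ hff x hx
    exact rowAgree A (hSrow x) (fun y hy => hff y (hrowS x hx hy))
  have hBapp : ∀ (f : ∀ y, F y) (x : T₀), B (rmapAux F S f) x = A f (x : X) := by
    intro f x
    show A (emapAux F S (rmapAux F S f)) (x : X) = A f (x : X)
    refine hagreeS _ _ ?_ (x : X) x.2
    intro y hy
    rw [emapAux_apply_mem _ _ hy]
    rfl
  have hBsurj : Function.Surjective B := by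
    intro y
    obtain ⟨f, hf⟩ := truncSurj A hinj T₀ y
    refine ⟨rmapAux F S f, ?_⟩
    funext x
    rw [hBapp f x]
    exact congrFun hf x
  let Bc := LinearMap.toContinuousLinearMap B
  have hBcsurj : Function.Surjective Bc := by
    intro y
    obtain ⟨p, hp⟩ := hBsurj y
    exact ⟨p, hp⟩
  obtain ⟨C, hC0, hC⟩ := Bc.exists_preimage_norm_le hBcsurj
  have hden : (0:ℝ) < (K.card : ℝ) * C + 1 := by positivity
  refine ⟨((K.card : ℝ) * C + 1)⁻¹, by positivity, T₀, hK.mono hKT₀, ?_⟩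
  intro g hg
  set ε : ℝ := ((K.card : ℝ) * C + 1)⁻¹ with hεdef
  have hε : 0 < ε := by positivity
  set y := rmapAux F T₀ g with hydef
  have hy : ‖y‖ ≤ ε := by
    rw [pi_norm_le_iff_of_nonneg hε.le]
    intro x
    calc ‖y x‖ = ‖g (x : X)‖ := rfl
    _ ≤ ∑ z ∈ T₀, ‖g z‖ := Finset.single_le_sum (fun i _ => norm_nonneg (g i)) x.2
    _ ≤ ε := hg
  obtain ⟨p, hBp, hp⟩ := hC y
  set f := emapAux F S p with hfdef
  have hsolT₀ : ∀ x ∈ T₀, A f x = g x := by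
    intro x hx
    have h1 : B p ⟨x, hx⟩ = y ⟨x, hx⟩ := by
      rw [show B p = y from by rw [← hBp]; rfl]
    exact h1
  have hpC : ‖p‖ ≤ C * ε := le_trans hp (mul_le_mul_of_nonneg_left hy hC0.le)
  have hbound : ∑ x ∈ K, ‖f x‖ ≤ 1 := by
    have h1 : ∀ x ∈ K, ‖f x‖ ≤ C * ε := by
      intro x hx
      have hxS : x ∈ S := hKS hx
      rw [hfdef, emapAux_apply_mem _ _ hxS]
      exact le_trans (norm_le_pi_norm p _) hpC
    calc ∑ x ∈ K, ‖f x‖ ≤ ∑ _x ∈ K, C * ε := Finset.sum_le_sum h1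
    _ = (K.card : ℝ) * (C * ε) := by rw [Finset.sum_const, nsmul_eq_mul]
    _ ≤ ((K.card : ℝ) * C + 1) * ε := by
        rw [← mul_assoc]
        exact mul_le_mul_of_nonneg_right (by linarith) hε.le
    _ = 1 := by
        rw [hεdef, mul_inv_cancel₀ (ne_of_gt hden)]
  have hgood : GoodAux A g K f := by
    intro T
    obtain ⟨h, hsol, hag⟩ := stab_images A hinj hstab
      (Finset.subset_union_left : T₀ ⊆ T₀ ∪ T) g f hsolT₀
    exact ⟨h, fun x hx => hsol x (Finset.mem_union_right _ hx), hag⟩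
  exact ⟨f, hgood, hbound⟩

end Aux


/-- **Main lemma (open mapping type statement, without closure).**
Let `X` be a countable set, `F = (F x)_{x ∈ X}` a family of finite-dimensional complex normed
vector spaces and `A` a continuous linear operator on `Γ(X;F) = ∀ x, F x` (product topology).
For finite `K ⊆ X` let `U_K = {f | ∑_{x ∈ K} ‖f x‖ ≤ 1}`.  If the dual operator is injective,
i.e. every finitely supported family `φ` of functionals with `∑ x, φ x (A f x) = 0` for all `f`
vanishes, then for every nonempty finite `K ⊆ X` there are `ε > 0` and a nonempty finite
`K' ⊆ X` with `ε·U_{K'} ⊆ A(U_K)`. -/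
theorem image_unitBall_absorbing
    {X : Type*} [Countable X]
    (F : X → Type*) [∀ x, NormedAddCommGroup (F x)] [∀ x, NormedSpace ℂ (F x)]
    [∀ x, FiniteDimensional ℂ (F x)]
    (A : (∀ x, F x) →L[ℂ] (∀ x, F x))
    (hinj : ∀ φ : ∀ x, F x →L[ℂ] ℂ, {x | φ x ≠ 0}.Finite →
      (∀ f : ∀ x, F x, ∑ᶠ x, φ x (A f x) = 0) → ∀ x, φ x = 0) :
    ∀ K : Finset X, K.Nonempty →
      ∃ ε : ℝ, 0 < ε ∧ ∃ K' : Finset X, K'.Nonempty ∧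
        {g : ∀ x, F x | ∑ x ∈ K', ‖g x‖ ≤ ε} ⊆
          A '' {f : ∀ x, F x | ∑ x ∈ K, ‖f x‖ ≤ 1} := by
  intro K hK
  obtain ⟨ε, hε, K', hK', hgood⟩ := good_start A hinj K hK
  refine ⟨ε, hε, K', hK', ?_⟩
  intro g hg
  obtain ⟨f₀, hf₀good, hf₀bound⟩ := hgood g hg
  have hne : Nonempty X := ⟨hK.choose⟩
  obtain ⟨e, he⟩ := exists_surjective_nat X
  set P : ℕ → Finset X := fun n => K ∪ (Finset.range n).image e with hPdef
  have hPmono : ∀ {n m : ℕ}, n ≤ m → P n ⊆ P m := by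
    intro n m hnm
    exact Finset.union_subset_union_right
      (Finset.image_subset_image (Finset.range_subset_range.mpr hnm))
  have hP0 : P 0 = K := by simp [hPdef]
  -- index function for the enumeration
  have hidx : ∀ x : X, ∃ n : ℕ, e n = x := he
  set idx : X → ℕ := fun x => (hidx x).choose with hidxdef
  have hidx_spec : ∀ x, e (idx x) = x := fun x => (hidx x).choose_spec
  have hmemP : ∀ (x : X) (n : ℕ), idx x < n → x ∈ P n := by
    intro x n hn
    apply Finset.mem_union_right
    exact Finset.mem_image.mpr ⟨idx x, Finset.mem_range.mpr hn, hidx_spec x⟩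
  -- the recursively constructed sequence of good partial solutions
  choose nxt hnxt1 hnxt2 using
    fun (n : ℕ) (f : {f : ∀ x, F x // GoodAux A g (P n) f}) =>
      good_extend A hinj g (hPmono (Nat.le_succ n)) f.2
  let seq : ∀ n : ℕ, {f : ∀ x, F x // GoodAux A g (P n) f} := fun n =>
    Nat.rec ⟨f₀, by rw [hP0]; exact hf₀good⟩ (fun n fn => ⟨nxt n fn, hnxt1 n fn⟩) n
  have hseq_succ : ∀ n, ∀ x ∈ P n, (seq (n+1)).1 x = (seq n).1 x := by
    intro n x hx
    exact hnxt2 n (seq n) x hx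
  have hcompat : ∀ n m, n ≤ m → ∀ x ∈ P n, (seq m).1 x = (seq n).1 x := by
    intro n m hnm
    induction m, hnm using Nat.le_induction with
    | base => intro x _; rfl
    | succ m hnm ih =>
      intro x hx
      rw [hseq_succ m x (hPmono hnm hx)]
      exact ih x hx
  set f : ∀ x, F x := fun x => (seq (idx x + 1)).1 x with hfdef
  have hf_val : ∀ n, ∀ x ∈ P n, f x = (seq n).1 x := by
    intro n x hx
    have hx1 : x ∈ P (idx x + 1) := hmemP x _ (Nat.lt_succ_self _)
    have h1 := hcompat (idx x + 1) (max n (idx x + 1)) (le_max_right _ _) x hx1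
    have h2 := hcompat n (max n (idx x + 1)) (le_max_left _ _) x hx
    show (seq (idx x + 1)).1 x = (seq n).1 x
    rw [← h1, h2]
  refine ⟨f, ?_, ?_⟩
  · -- the norm bound
    show ∑ x ∈ K, ‖f x‖ ≤ 1
    have : ∀ x ∈ K, ‖f x‖ = ‖f₀ x‖ := by
      intro x hx
      rw [hf_val 0 x (by rw [hP0]; exact hx)]
      rfl
    rw [Finset.sum_congr rfl this]
    exact hf₀bound
  · -- A f = g
    funext x
    obtain ⟨S, hS⟩ := rowFinite A x
    set n : ℕ := (S.sup idx) + 1 with hndef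
    have hSP : ∀ y ∈ S, y ∈ P n := by
      intro y hy
      apply hmemP
      exact Nat.lt_succ_of_le (Finset.le_sup hy)
    obtain ⟨h, hsol, hagree⟩ := (seq n).2 {x}
    have h1 : A f x = A h x := by
      apply rowAgree A hS
      intro y hy
      rw [hf_val n y (hSP y hy), hagree y (hSP y hy)]
    rw [h1, hsol x (Finset.mem_singleton_self x)]
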